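/- For every r ≥ 1 and every n, the r-major index rmaj is equidistributed with inv over S_n; that is, Σ_{π∈S_n} q^{rmaj(π)} = Σ_{π∈S_n} q^{inv(π)}. -/

import Mathlib

open Finset Equiv

namespace PaperStat

noncomputable section

attribute [local instance] Classical.propDecidable

/-- number of inversions of a permutation (pairs i<j with π i > π j) -/
def inv {n : ℕ} (π : Perm (Fin n)) : ℕ :=
  (univ.filter (fun p : Fin n × Fin n => p.1 < p.2 ∧ π p.2 < π p.1)).card

/-- pairs (i, i+1) forming an r-descent -/
def desSet {n : ℕ} (r : ℕ) (π : Perm (Fin n)) : Finset (Fin n × Fin n) :=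
  univ.filter (fun p : Fin n × Fin n =>
    (p.2 : ℕ) = (p.1 : ℕ) + 1 ∧ (π p.2 : ℕ) + r ≤ (π p.1 : ℕ))

/-- r-descent number -/
def rdes {n : ℕ} (r : ℕ) (π : Perm (Fin n)) : ℕ := (desSet r π).card

/-- r-major index: sum of (1-based) r-descent positions plus |rInv| -/
def rmaj {n : ℕ} (r : ℕ) (π : Perm (Fin n)) : ℕ :=
  (∑ p ∈ desSet r π, ((p.1 : ℕ) + 1)) +
  (univ.filter (fun p : Fin n × Fin n =>
      p.1 < p.2 ∧ (π p.2 : ℕ) < (π p.1 : ℕ) ∧ (π p.1 : ℕ) < (π p.2 : ℕ) + r)).card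

/-- descent number -/
def des {n : ℕ} (π : Perm (Fin n)) : ℕ := rdes 1 π

/-- major index -/
def maj {n : ℕ} (π : Perm (Fin n)) : ℕ := ∑ p ∈ desSet 1 π, ((p.1 : ℕ) + 1)

/-- i is a g-gap L-level excedance place (1-based: π_i ≥ i+g and π_i ≥ L) -/
def excp {n : ℕ} (g L : ℕ) (π : Perm (Fin n)) (i : Fin n) : Prop :=
  (i : ℕ) + g ≤ (π i : ℕ) ∧ L ≤ (π i : ℕ) + 1

/-- g-gap ℓ-level excedance number: positions i ≥ ℓ (1-based) with π_i ≥ i+g -/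
def gexc {n : ℕ} (g l : ℕ) (π : Perm (Fin n)) : ℕ :=
  (univ.filter (fun i : Fin n => l ≤ (i : ℕ) + 1 ∧ (i : ℕ) + g ≤ (π i : ℕ))).card

/-- inversions of the subword of π on positions satisfying P -/
def invOn {n : ℕ} (π : Perm (Fin n)) (P : Fin n → Prop) : ℕ :=
  (univ.filter (fun p : Fin n × Fin n =>
    P p.1 ∧ P p.2 ∧ p.1 < p.2 ∧ π p.2 < π p.1)).card

/-- g-gap L-level Denert statistic: Σ_{i ∈ gExcp}(i+g-1) (1-based) + inversions
of the excedance subword + inversions of the non-excedance subword -/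
def gden {n : ℕ} (g L : ℕ) (π : Perm (Fin n)) : ℕ :=
  (∑ i ∈ univ.filter (fun i : Fin n => excp g L π i), ((i : ℕ) + g)) +
  invOn π (fun i => excp g L π i) +
  invOn π (fun i => ¬ excp g L π i)

section Aux
variable {n : ℕ}

/-- value of `σ` at natural position `j`, as a natural number (0 out of range). -/
def nv (σ : Perm (Fin n)) (j : ℕ) : ℕ := if h : j < n then (σ ⟨j, h⟩ : ℕ) else 0

@[simp] lemma nv_coe (σ : Perm (Fin n)) (i : Fin n) : nv σ (i : ℕ) = (σ i : ℕ) := by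
  simp only [nv, dif_pos i.isLt, Fin.eta]

lemma nv_lt (σ : Perm (Fin n)) {j : ℕ} (h : j < n) : nv σ j < n := by
  simp only [nv, dif_pos h]; exact (σ ⟨j, h⟩).isLt

/-- descent predicate on naturals -/
def dsc (r : ℕ) {n : ℕ} (σ : Perm (Fin n)) (i : ℕ) : Prop :=
  i + 1 < n ∧ nv σ (i+1) + r ≤ nv σ i

lemma inv_eq (π : Perm (Fin n)) :
    inv π = ∑ i ∈ range n, ∑ j ∈ range n, (if i < j ∧ nv π j < nv π i then 1 else 0) := by
  rw [inv, card_filter, Fintype.sum_prod_type]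
  rw [← Fin.sum_univ_eq_sum_range
    (fun i => ∑ j ∈ range n, (if i < j ∧ nv π j < nv π i then 1 else 0))]
  refine Finset.sum_congr rfl (fun x _ => ?_)
  rw [← Fin.sum_univ_eq_sum_range (fun j => (if (x:ℕ) < j ∧ nv π j < nv π (x:ℕ) then 1 else 0))]
  refine Finset.sum_congr rfl (fun y _ => ?_)
  simp only [nv_coe, Fin.lt_def]

lemma rmaj_eq (r : ℕ) (π : Perm (Fin n)) :
    rmaj r π = (∑ i ∈ range n, (if dsc r π i then i + 1 else 0)) +
      ∑ i ∈ range n, ∑ j ∈ range n,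
        (if i < j ∧ nv π j < nv π i ∧ nv π i < nv π j + r then 1 else 0) := by
  rw [rmaj]
  congr 1
  · rw [desSet, Finset.sum_filter, Fintype.sum_prod_type]
    rw [← Fin.sum_univ_eq_sum_range (fun i => (if dsc r π i then i + 1 else 0))]
    refine Finset.sum_congr rfl (fun x _ => ?_)
    have key : ∀ y : Fin n, (if (y:ℕ) = (x:ℕ) + 1 ∧ (π y : ℕ) + r ≤ (π x : ℕ) then ((x:ℕ) + 1) else 0)
        = (if (y:ℕ) = (x:ℕ) + 1 then (if nv π ((x:ℕ)+1) + r ≤ nv π (x:ℕ) then (x:ℕ)+1 else 0) else 0) := by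
      intro y
      by_cases h : (y:ℕ) = (x:ℕ) + 1
      · have hnv : nv π ((x:ℕ)+1) = (π y : ℕ) := by rw [← h, nv_coe]
        simp [h, hnv]
      · simp [h]
    rw [Finset.sum_congr rfl (fun y _ => key y),
      Fin.sum_univ_eq_sum_range (fun j =>
        (if j = (x:ℕ) + 1 then (if nv π ((x:ℕ)+1) + r ≤ nv π (x:ℕ) then (x:ℕ)+1 else 0) else 0)),
      Finset.sum_ite_eq' (range n) ((x:ℕ)+1)]
    simp only [mem_range, dsc]
    by_cases h1 : (x:ℕ) + 1 < n <;> by_cases h2 : nv π ((x:ℕ)+1) + r ≤ nv π (x:ℕ) <;> simp [h1, h2]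
  · rw [card_filter, Fintype.sum_prod_type]
    rw [← Fin.sum_univ_eq_sum_range (fun i => ∑ j ∈ range n,
      (if i < j ∧ nv π j < nv π i ∧ nv π i < nv π j + r then 1 else 0))]
    refine Finset.sum_congr rfl (fun x _ => ?_)
    rw [← Fin.sum_univ_eq_sum_range (fun j =>
      (if (x:ℕ) < j ∧ nv π j < nv π (x:ℕ) ∧ nv π (x:ℕ) < nv π j + r then 1 else 0))]
    refine Finset.sum_congr rfl (fun y _ => ?_)
    simp only [nv_coe, Fin.lt_def]

/-- insertion of the maximal letter at slot k -/
def ins (σ : Perm (Fin n)) (k : Fin (n+1)) : Perm (Fin (n+1)) :=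
  ((finSuccEquiv' k).trans (Equiv.optionCongr σ)).trans (finSuccEquiv' (Fin.last n)).symm

@[simp] lemma ins_at (σ : Perm (Fin n)) (k : Fin (n+1)) : ins σ k k = Fin.last n := by
  simp [ins, finSuccEquiv'_at, finSuccEquiv'_symm_none]

@[simp] lemma ins_succAbove (σ : Perm (Fin n)) (k : Fin (n+1)) (j : Fin n) :
    ins σ k (k.succAbove j) = (σ j).castSucc := by
  simp [ins, finSuccEquiv'_succAbove, finSuccEquiv'_symm_some, Fin.succAbove_last]

lemma coe_succAbove (k : Fin (n+1)) (j : Fin n) :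
    (k.succAbove j : ℕ) = if (j:ℕ) < (k:ℕ) then (j:ℕ) else (j:ℕ)+1 := by
  have hc : (Fin.castSucc j < k) ↔ ((j:ℕ) < (k:ℕ)) := by rw [Fin.lt_def]; simp
  rw [Fin.succAbove]
  split_ifs with h1 h2 <;> simp_all

lemma nv_ins_at (σ : Perm (Fin n)) (k : Fin (n+1)) : nv (ins σ k) (k : ℕ) = n := by
  have h : ((k:ℕ)) < n+1 := k.isLt
  simp only [nv, dif_pos h]
  have hk : (⟨(k:ℕ), h⟩ : Fin (n+1)) = k := by ext; rfl
  rw [hk, ins_at]; simp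

/-- the slot map on naturals -/
def sa (k : ℕ) (j : ℕ) : ℕ := if j < k then j else j + 1

lemma lt_sa {k j : ℕ} : k < sa k j ↔ k ≤ j := by
  unfold sa; by_cases h : j < k
  · rw [if_pos h]; omega
  · rw [if_neg h]; omega
lemma sa_lt {k j : ℕ} : sa k j < k ↔ j < k := by
  unfold sa; by_cases h : j < k
  · rw [if_pos h]
  · rw [if_neg h]; omega
lemma sa_lt_sa {k a b : ℕ} : sa k a < sa k b ↔ a < b := by
  unfold sa
  by_cases h : a < k <;> by_cases h' : b < k
  · rw [if_pos h, if_pos h']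
  · rw [if_pos h, if_neg h']; omega
  · rw [if_neg h, if_pos h']; omega
  · rw [if_neg h, if_neg h']; omega
lemma sa_succ {k j : ℕ} (h : k ≤ j) : sa k j = j + 1 := by unfold sa; rw [if_neg (by omega)]
lemma sa_self {k j : ℕ} (h : j < k) : sa k j = j := by unfold sa; rw [if_pos h]

lemma cnt_ge (m : ℕ) : (∑ b ∈ range n, if m ≤ b then (1:ℕ) else 0) = n - m := by
  rw [← Finset.card_filter]
  have h : (range n).filter (fun b => m ≤ b) = Ico m n := by
    ext x; simp only [mem_filter, mem_range, mem_Ico]; omega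
  rw [h, Nat.card_Ico]

lemma nv_ins_sa (σ : Perm (Fin n)) (k : Fin (n+1)) {j : ℕ} (hj : j < n) :
    nv (ins σ k) (sa (k:ℕ) j) = nv σ j := by
  have h1 : sa (k:ℕ) j = (k.succAbove ⟨j, hj⟩ : ℕ) := by
    rw [coe_succAbove]; rfl
  have h2 : sa (k:ℕ) j < n + 1 := by
    rw [h1]; exact (k.succAbove ⟨j, hj⟩).isLt
  simp only [nv, dif_pos h2, dif_pos hj]
  have h3 : (⟨sa (k:ℕ) j, h2⟩ : Fin (n+1)) = k.succAbove ⟨j, hj⟩ := by ext; exact h1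
  rw [h3, ins_succAbove]; simp

/-- reindexing sums over range (n+1) through slot k -/
lemma sum_range_succ_sa {M : Type*} [AddCommMonoid M] (k : Fin (n+1)) (f : ℕ → M) :
    ∑ i ∈ range (n+1), f i = f (k:ℕ) + ∑ j ∈ range n, f (sa (k:ℕ) j) := by
  have himg : (range n).image (sa (k:ℕ)) = (range (n+1)).erase (k:ℕ) := by
    ext x
    simp only [mem_image, mem_erase, mem_range, sa]
    constructor
    · rintro ⟨j, hj, rfl⟩
      have := k.isLt
      split <;> omega
    · rintro ⟨hx, hxn⟩
      rcases lt_or_gt_of_ne hx with h | h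
      · exact ⟨x, by omega, by split <;> omega⟩
      · exact ⟨x - 1, by omega, by split <;> omega⟩
  have hinj : Set.InjOn (sa (k:ℕ)) (range n) := by
    intro a _ b _ hab
    simp only [sa] at hab; split_ifs at hab <;> omega
  rw [← Finset.sum_image (fun a ha b hb h => hinj ha hb h), himg,
    Finset.add_sum_erase _ f (mem_range.mpr k.isLt)]

lemma sum2_range_succ_sa {M : Type*} [AddCommMonoid M] (k : Fin (n+1)) (F : ℕ → ℕ → M) :
    ∑ i ∈ range (n+1), ∑ j ∈ range (n+1), F i j
    = F (k:ℕ) (k:ℕ) + ((∑ b ∈ range n, F (k:ℕ) (sa (k:ℕ) b))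
      + ((∑ a ∈ range n, F (sa (k:ℕ) a) (k:ℕ))
      + ∑ a ∈ range n, ∑ b ∈ range n, F (sa (k:ℕ) a) (sa (k:ℕ) b))) := by
  rw [sum_range_succ_sa k (fun i => ∑ j ∈ range (n+1), F i j),
      sum_range_succ_sa k (F (k:ℕ))]
  have h : ∀ a ∈ range n, (fun i => ∑ j ∈ range (n+1), F i j) (sa (k:ℕ) a)
      = F (sa (k:ℕ) a) (k:ℕ) + ∑ b ∈ range n, F (sa (k:ℕ) a) (sa (k:ℕ) b) :=
    fun a _ => sum_range_succ_sa k (F (sa (k:ℕ) a))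
  rw [Finset.sum_congr rfl h, Finset.sum_add_distrib]
  simp [add_assoc]

lemma inv_ins (σ : Perm (Fin n)) (k : Fin (n+1)) :
    inv (ins σ k) = inv σ + (n - (k:ℕ)) := by
  rw [inv_eq,
    sum2_range_succ_sa k (fun i j => if i < j ∧ nv (ins σ k) j < nv (ins σ k) i then (1:ℕ) else 0)]
  have hP1 : (if (k:ℕ) < (k:ℕ) ∧ nv (ins σ k) (k:ℕ) < nv (ins σ k) (k:ℕ) then (1:ℕ) else 0) = 0 := by
    rw [if_neg]; rintro ⟨h, -⟩; exact lt_irrefl _ h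
  have hP2 : (∑ b ∈ range n, if (k:ℕ) < sa (k:ℕ) b ∧ nv (ins σ k) (sa (k:ℕ) b) < nv (ins σ k) (k:ℕ) then (1:ℕ) else 0) = n - (k:ℕ) := by
    rw [← cnt_ge (n := n) (k:ℕ)]
    refine Finset.sum_congr rfl (fun b hb => ?_)
    have hbn := mem_range.mp hb
    rw [nv_ins_at, nv_ins_sa σ k hbn]
    refine if_congr ?_ rfl rfl
    rw [lt_sa]
    exact ⟨fun h => h.1, fun h => ⟨h, nv_lt σ hbn⟩⟩
  have hP3 : (∑ a ∈ range n, if sa (k:ℕ) a < (k:ℕ) ∧ nv (ins σ k) (k:ℕ) < nv (ins σ k) (sa (k:ℕ) a) then (1:ℕ) else 0) = 0 := by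
    refine Finset.sum_eq_zero (fun a ha => ?_)
    have han := mem_range.mp ha
    rw [nv_ins_at, nv_ins_sa σ k han, if_neg]
    rintro ⟨-, h⟩
    exact absurd (nv_lt σ han) (by omega)
  have hP4 : (∑ a ∈ range n, ∑ b ∈ range n, if sa (k:ℕ) a < sa (k:ℕ) b ∧ nv (ins σ k) (sa (k:ℕ) b) < nv (ins σ k) (sa (k:ℕ) a) then (1:ℕ) else 0) = inv σ := by
    rw [inv_eq]
    refine Finset.sum_congr rfl (fun a ha => Finset.sum_congr rfl (fun b hb => ?_))
    rw [nv_ins_sa σ k (mem_range.mp ha), nv_ins_sa σ k (mem_range.mp hb)]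
    exact if_congr (and_congr sa_lt_sa Iff.rfl) rfl rfl
  rw [hP1, hP2, hP3, hP4]
  omega

lemma rmaj_desc_part (r : ℕ) (σ : Perm (Fin n)) (k : Fin (n+1)) :
    (∑ i ∈ range (n+1), (if dsc r (ins σ k) i then i + 1 else 0))
    = (if (k:ℕ) < n ∧ nv σ (k:ℕ) + r ≤ n then (k:ℕ)+1 else 0)
      + ∑ j ∈ range n, (if j+1 < (k:ℕ) then (if dsc r σ j then j+1 else 0)
          else if j+1 = (k:ℕ) then 0 else (if dsc r σ j then j+2 else 0)) := by
  rw [sum_range_succ_sa k (fun i => if dsc r (ins σ k) i then i + 1 else 0)]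
  congr 1
  · by_cases hkn : (k:ℕ) < n
    · have h1 : nv (ins σ k) ((k:ℕ)+1) = nv σ (k:ℕ) := by
        have h0 := nv_ins_sa σ k (j := (k:ℕ)) hkn
        rw [sa_succ (le_refl (k:ℕ))] at h0
        exact h0
      refine if_congr ?_ rfl rfl
      simp only [dsc, h1, nv_ins_at]
      constructor
      · rintro ⟨-, h2⟩; exact ⟨hkn, h2⟩
      · rintro ⟨-, h2⟩; exact ⟨by omega, h2⟩
    · rw [if_neg (show ¬((k:ℕ) < n ∧ nv σ (k:ℕ) + r ≤ n) from fun h => hkn h.1),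
        if_neg (show ¬ dsc r (ins σ k) (k:ℕ) from ?_)]
      simp only [dsc]
      rintro ⟨h1, -⟩; omega
  · refine Finset.sum_congr rfl (fun j hj => ?_)
    have hjn := mem_range.mp hj
    have hkn1 := k.isLt
    rcases lt_trichotomy (j+1) (k:ℕ) with h | h | h
    · rw [if_pos h, sa_self (show j < (k:ℕ) by omega)]
      have e1 : nv (ins σ k) j = nv σ j := by
        have h0 := nv_ins_sa σ k (j := j) hjn
        rwa [sa_self (show j < (k:ℕ) by omega)] at h0
      have e2 : nv (ins σ k) (j+1) = nv σ (j+1) := by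
        have h0 := nv_ins_sa σ k (j := j+1) (show j+1 < n by omega)
        rwa [sa_self h] at h0
      refine if_congr ?_ rfl rfl
      simp only [dsc, e1, e2]
      constructor
      · rintro ⟨-, h2⟩; exact ⟨by omega, h2⟩
      · rintro ⟨-, h2⟩; exact ⟨by omega, h2⟩
    · rw [if_neg (show ¬(j+1 < (k:ℕ)) by omega), if_pos h, sa_self (show j < (k:ℕ) by omega)]
      have e1 : nv (ins σ k) j = nv σ j := by
        have h0 := nv_ins_sa σ k (j := j) hjn
        rwa [sa_self (show j < (k:ℕ) by omega)] at h0
      rw [if_neg]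
      simp only [dsc]
      rintro ⟨-, h2⟩
      rw [h, nv_ins_at, e1] at h2
      have := nv_lt σ hjn
      omega
    · rw [if_neg (show ¬(j+1 < (k:ℕ)) by omega), if_neg (show ¬(j+1 = (k:ℕ)) by omega),
        sa_succ (show (k:ℕ) ≤ j by omega)]
      have e1 : nv (ins σ k) (j+1) = nv σ j := by
        have h0 := nv_ins_sa σ k (j := j) hjn
        rwa [sa_succ (show (k:ℕ) ≤ j by omega)] at h0
      by_cases hj1 : j + 1 < n
      · have e2 : nv (ins σ k) (j+2) = nv σ (j+1) := by
          have h0 := nv_ins_sa σ k (j := j+1) hj1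
          rwa [sa_succ (show (k:ℕ) ≤ j+1 by omega)] at h0
        refine if_congr ?_ rfl rfl
        simp only [dsc, e1, e2]
        constructor
        · rintro ⟨-, h2⟩; exact ⟨by omega, h2⟩
        · rintro ⟨-, h2⟩; exact ⟨by omega, h2⟩
      · rw [if_neg (show ¬ dsc r (ins σ k) (j+1) from ?_),
          if_neg (show ¬ dsc r σ j from ?_)]
        · simp only [dsc]; rintro ⟨h1, -⟩; omega
        · simp only [dsc]; rintro ⟨h1, -⟩; omega
lemma rmaj_rinv_part (r : ℕ) (σ : Perm (Fin n)) (k : Fin (n+1)) :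
    (∑ i ∈ range (n+1), ∑ j ∈ range (n+1),
      (if i < j ∧ nv (ins σ k) j < nv (ins σ k) i ∧ nv (ins σ k) i < nv (ins σ k) j + r then 1 else 0))
    = (∑ i ∈ range n, ∑ j ∈ range n,
        (if i < j ∧ nv σ j < nv σ i ∧ nv σ i < nv σ j + r then 1 else 0))
      + ∑ b ∈ range n, (if (k:ℕ) ≤ b ∧ n < nv σ b + r then 1 else 0) := by
  rw [sum2_range_succ_sa k (fun i j =>
    if i < j ∧ nv (ins σ k) j < nv (ins σ k) i ∧ nv (ins σ k) i < nv (ins σ k) j + r then (1:ℕ) else 0)]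
  have hP1 : (if (k:ℕ) < (k:ℕ) ∧ nv (ins σ k) (k:ℕ) < nv (ins σ k) (k:ℕ) ∧ nv (ins σ k) (k:ℕ) < nv (ins σ k) (k:ℕ) + r then (1:ℕ) else 0) = 0 := by
    rw [if_neg]; rintro ⟨h, -⟩; exact lt_irrefl _ h
  have hP2 : (∑ b ∈ range n, if (k:ℕ) < sa (k:ℕ) b ∧ nv (ins σ k) (sa (k:ℕ) b) < nv (ins σ k) (k:ℕ) ∧ nv (ins σ k) (k:ℕ) < nv (ins σ k) (sa (k:ℕ) b) + r then (1:ℕ) else 0)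
      = ∑ b ∈ range n, (if (k:ℕ) ≤ b ∧ n < nv σ b + r then 1 else 0) := by
    refine Finset.sum_congr rfl (fun b hb => ?_)
    have hbn := mem_range.mp hb
    rw [nv_ins_at, nv_ins_sa σ k hbn]
    refine if_congr ?_ rfl rfl
    rw [lt_sa]
    have := nv_lt σ hbn
    constructor
    · rintro ⟨h1, -, h3⟩; exact ⟨h1, h3⟩
    · rintro ⟨h1, h2⟩; exact ⟨h1, by omega, h2⟩
  have hP3 : (∑ a ∈ range n, if sa (k:ℕ) a < (k:ℕ) ∧ nv (ins σ k) (k:ℕ) < nv (ins σ k) (sa (k:ℕ) a) ∧ nv (ins σ k) (sa (k:ℕ) a) < nv (ins σ k) (k:ℕ) + r then (1:ℕ) else 0) = 0 := by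
    refine Finset.sum_eq_zero (fun a ha => ?_)
    have han := mem_range.mp ha
    rw [nv_ins_at, nv_ins_sa σ k han, if_neg]
    rintro ⟨-, h2, -⟩
    exact absurd (nv_lt σ han) (by omega)
  have hP4 : (∑ a ∈ range n, ∑ b ∈ range n, if sa (k:ℕ) a < sa (k:ℕ) b ∧ nv (ins σ k) (sa (k:ℕ) b) < nv (ins σ k) (sa (k:ℕ) a) ∧ nv (ins σ k) (sa (k:ℕ) a) < nv (ins σ k) (sa (k:ℕ) b) + r then (1:ℕ) else 0)
      = ∑ i ∈ range n, ∑ j ∈ range n,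
        (if i < j ∧ nv σ j < nv σ i ∧ nv σ i < nv σ j + r then (1:ℕ) else 0) := by
    refine Finset.sum_congr rfl (fun a ha => Finset.sum_congr rfl (fun b hb => ?_))
    rw [nv_ins_sa σ k (mem_range.mp ha), nv_ins_sa σ k (mem_range.mp hb)]
    exact if_congr (and_congr sa_lt_sa Iff.rfl) rfl rfl
  rw [hP1, hP2, hP3, hP4]
  omega

lemma rmaj_ins (r : ℕ) (σ : Perm (Fin n)) (k : Fin (n+1)) :
    rmaj r (ins σ k) + (if 0 < (k:ℕ) ∧ dsc r σ ((k:ℕ)-1) then (k:ℕ) else 0)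
    = rmaj r σ + ((∑ j ∈ range n, (if (k:ℕ) ≤ j ∧ dsc r σ j then 1 else 0))
       + (∑ b ∈ range n, (if (k:ℕ) ≤ b ∧ n < nv σ b + r then 1 else 0))
       + (if (k:ℕ) < n ∧ nv σ (k:ℕ) + r ≤ n then (k:ℕ)+1 else 0)) := by
  rw [rmaj_eq r (ins σ k), rmaj_eq r σ, rmaj_desc_part r σ k, rmaj_rinv_part r σ k]
  have key : ∀ j ∈ range n,
      ((if j+1 < (k:ℕ) then (if dsc r σ j then j+1 else 0)
          else if j+1 = (k:ℕ) then 0 else (if dsc r σ j then j+2 else 0))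
        + (if j+1 = (k:ℕ) ∧ dsc r σ j then j+1 else 0) : ℕ)
      = (if dsc r σ j then j+1 else 0) + (if (k:ℕ) ≤ j ∧ dsc r σ j then 1 else 0) := by
    intro j hj
    by_cases hd : dsc r σ j
    · rcases lt_trichotomy (j+1) (k:ℕ) with h | h | h
      · rw [if_pos hd, if_pos h,
          if_neg (show ¬(j+1 = (k:ℕ) ∧ dsc r σ j) from fun hc => by omega),
          if_neg (show ¬((k:ℕ) ≤ j ∧ dsc r σ j) from fun hc => by omega)]
      · rw [if_pos hd, if_neg (show ¬(j+1 < (k:ℕ)) by omega), if_pos h,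
          if_pos (show j+1 = (k:ℕ) ∧ dsc r σ j from ⟨h, hd⟩),
          if_neg (show ¬((k:ℕ) ≤ j ∧ dsc r σ j) from fun hc => by omega)]
        omega
      · rw [if_pos hd, if_neg (show ¬(j+1 < (k:ℕ)) by omega),
          if_neg (show ¬(j+1 = (k:ℕ)) by omega), if_pos hd,
          if_neg (show ¬(j+1 = (k:ℕ) ∧ dsc r σ j) from fun hc => by omega),
          if_pos (show (k:ℕ) ≤ j ∧ dsc r σ j from ⟨by omega, hd⟩)]
    · rw [if_neg hd, if_neg hd,
        if_neg (show ¬(j+1 = (k:ℕ) ∧ dsc r σ j) from fun hc => hd hc.2),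
        if_neg (show ¬((k:ℕ) ≤ j ∧ dsc r σ j) from fun hc => hd hc.2),
        ite_self, ite_self]
  have hsum := Finset.sum_congr rfl key
  rw [Finset.sum_add_distrib, Finset.sum_add_distrib] at hsum
  have collapse : (∑ j ∈ range n, (if j+1 = (k:ℕ) ∧ dsc r σ j then j+1 else 0) : ℕ)
      = (if 0 < (k:ℕ) ∧ dsc r σ ((k:ℕ)-1) then (k:ℕ) else 0) := by
    by_cases hk : 0 < (k:ℕ)
    · have hkn : (k:ℕ) - 1 < n := by have := k.isLt; omega
      rw [Finset.sum_eq_single_of_mem ((k:ℕ)-1) (mem_range.mpr hkn)]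
      · by_cases hd : dsc r σ ((k:ℕ)-1)
        · rw [if_pos (show (k:ℕ)-1+1 = (k:ℕ) ∧ dsc r σ ((k:ℕ)-1) from ⟨by omega, hd⟩),
            if_pos (show 0 < (k:ℕ) ∧ dsc r σ ((k:ℕ)-1) from ⟨hk, hd⟩)]
          omega
        · rw [if_neg (show ¬((k:ℕ)-1+1 = (k:ℕ) ∧ dsc r σ ((k:ℕ)-1)) from fun hc => hd hc.2),
            if_neg (show ¬(0 < (k:ℕ) ∧ dsc r σ ((k:ℕ)-1)) from fun hc => hd hc.2)]
      · intro b _ hb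
        rw [if_neg (show ¬(b+1 = (k:ℕ) ∧ dsc r σ b) from fun hc => by omega)]
    · rw [if_neg (show ¬(0 < (k:ℕ) ∧ dsc r σ ((k:ℕ)-1)) from fun hc => by omega)]
      refine Finset.sum_eq_zero (fun b _ => ?_)
      rw [if_neg (show ¬(b+1 = (k:ℕ) ∧ dsc r σ b) from fun hc => by omega)]
  rw [collapse] at hsum
  omega

end Aux

section Core
variable (n : ℕ) (d b : ℕ → Prop)

/-- low-slot predicate -/
def Lw (s : ℕ) : Prop := b s ∨ (0 < s ∧ d (s-1))

def Cd (x y : ℕ) : ℕ := ((Ico x y).filter d).card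
def Cb (x y : ℕ) : ℕ := ((Ico x y).filter b).card
def Ek (k : ℕ) : ℕ := Cd d k n + Cb b k n

def Dl (k : ℕ) : ℕ :=
  Ek n d b k + (if k < n ∧ ¬ b k then (if 0 < k ∧ d (k-1) then 1 else k+1) else 0)

variable {n d b}

section core
variable (H1 : ∀ j, d j → j + 1 < n) (H2 : ∀ j, b j → j < n) (H3 : ∀ j, d j → ¬ b (j+1))

include H3 in
lemma contribA {a c : ℕ} (hc : ¬ Lw d b c) :
    Cd d a c + Cb b a c ≤ ((Ico a c).filter (Lw d b)).card := by
  classical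
  set A := ((Ico a c).filter d).image (· + 1) with hA
  have hAcard : A.card = ((Ico a c).filter d).card :=
    Finset.card_image_of_injective _ (fun x y h => by omega)
  have hsub : A ∪ (Ico a c).filter b ⊆ (Ico a c).filter (Lw d b) := by
    intro s hs
    rcases Finset.mem_union.mp hs with hs | hs
    · obtain ⟨j, hj, rfl⟩ := Finset.mem_image.mp hs
      obtain ⟨hj1, hj2⟩ := Finset.mem_filter.mp hj
      have hjIco := Finset.mem_Ico.mp hj1
      have hLs : Lw d b (j+1) := Or.inr ⟨by omega, by simpa using hj2⟩
      refine Finset.mem_filter.mpr ⟨Finset.mem_Ico.mpr ⟨by omega, ?_⟩, hLs⟩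
      rcases Nat.lt_or_ge (j+1) c with h | h
      · exact h
      · exfalso; have : j + 1 = c := by omega
        exact hc (this ▸ hLs)
    · obtain ⟨hs1, hs2⟩ := Finset.mem_filter.mp hs
      exact Finset.mem_filter.mpr ⟨hs1, Or.inl hs2⟩
  have hdisj : Disjoint A ((Ico a c).filter b) := by
    rw [Finset.disjoint_left]
    rintro s hsA hsB
    obtain ⟨j, hj, rfl⟩ := Finset.mem_image.mp hsA
    obtain ⟨-, hj2⟩ := Finset.mem_filter.mp hj
    obtain ⟨-, hs2⟩ := Finset.mem_filter.mp hsB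
    exact H3 j hj2 hs2
  calc Cd d a c + Cb b a c = A.card + ((Ico a c).filter b).card := by
        rw [hAcard]; rfl
    _ = (A ∪ (Ico a c).filter b).card := (Finset.card_union_of_disjoint hdisj).symm
    _ ≤ _ := Finset.card_le_card hsub

include H3 in
lemma contribB {a c : ℕ} (hba : ¬ b a) (hc : ¬ Lw d b c) :
    Cd d a c + Cb b a c ≤ ((Ico (a+1) c).filter (Lw d b)).card := by
  classical
  set A := ((Ico a c).filter d).image (· + 1) with hA
  have hAcard : A.card = ((Ico a c).filter d).card :=
    Finset.card_image_of_injective _ (fun x y h => by omega)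
  have hsub : A ∪ (Ico a c).filter b ⊆ (Ico (a+1) c).filter (Lw d b) := by
    intro s hs
    rcases Finset.mem_union.mp hs with hs | hs
    · obtain ⟨j, hj, rfl⟩ := Finset.mem_image.mp hs
      obtain ⟨hj1, hj2⟩ := Finset.mem_filter.mp hj
      have hjIco := Finset.mem_Ico.mp hj1
      have hLs : Lw d b (j+1) := Or.inr ⟨by omega, by simpa using hj2⟩
      refine Finset.mem_filter.mpr ⟨Finset.mem_Ico.mpr ⟨by omega, ?_⟩, hLs⟩
      rcases Nat.lt_or_ge (j+1) c with h | h
      · exact h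
      · exfalso; have : j + 1 = c := by omega
        exact hc (this ▸ hLs)
    · obtain ⟨hs1, hs2⟩ := Finset.mem_filter.mp hs
      have hsIco := Finset.mem_Ico.mp hs1
      have hsa : s ≠ a := fun h => hba (h ▸ hs2)
      exact Finset.mem_filter.mpr ⟨Finset.mem_Ico.mpr ⟨by omega, hsIco.2⟩, Or.inl hs2⟩
  have hdisj : Disjoint A ((Ico a c).filter b) := by
    rw [Finset.disjoint_left]
    rintro s hsA hsB
    obtain ⟨j, hj, rfl⟩ := Finset.mem_image.mp hsA
    obtain ⟨-, hj2⟩ := Finset.mem_filter.mp hj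
    obtain ⟨-, hs2⟩ := Finset.mem_filter.mp hsB
    exact H3 j hj2 hs2
  calc Cd d a c + Cb b a c = A.card + ((Ico a c).filter b).card := by
        rw [hAcard]; rfl
    _ = (A ∪ (Ico a c).filter b).card := (Finset.card_union_of_disjoint hdisj).symm
    _ ≤ _ := Finset.card_le_card hsub

include H1 H2 in
lemma Lw_not_n : ¬ Lw d b n := by
  rintro (h | ⟨h0, hd⟩)
  · exact absurd (H2 n h) (lt_irrefl n)
  · have := H1 _ hd; omega

lemma Lcard_le (x y : ℕ) : ((Ico x y).filter (Lw d b)).card ≤ y - x := by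
  calc ((Ico x y).filter (Lw d b)).card ≤ (Ico x y).card := Finset.card_filter_le _ _
    _ = y - x := Nat.card_Ico x y

include H1 H2 H3 in
lemma Ek_le_highslot {k : ℕ} (hbk : ¬ b k) : Ek n d b k ≤ n - (k+1) := by
  calc Ek n d b k ≤ ((Ico (k+1) n).filter (Lw d b)).card :=
        contribB H3 hbk (Lw_not_n H1 H2)
    _ ≤ n - (k+1) := Lcard_le _ _

include H1 H2 H3 in
lemma Ek_le {k : ℕ} : Ek n d b k ≤ n - k := by
  calc Ek n d b k ≤ ((Ico k n).filter (Lw d b)).card := contribA H3 (Lw_not_n H1 H2)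
    _ ≤ n - k := Lcard_le _ _

include H1 H2 H3 in
lemma Dl_le {k : ℕ} (hk : k ≤ n) : Dl n d b k ≤ n := by
  unfold Dl
  by_cases h1 : k < n ∧ ¬ b k
  · rw [if_pos h1]
    by_cases h2 : 0 < k ∧ d (k-1)
    · rw [if_pos h2]
      have := Ek_le_highslot H1 H2 H3 (n := n) (k := k) h1.2
      omega
    · rw [if_neg h2]
      have := Ek_le_highslot H1 H2 H3 (n := n) (k := k) h1.2
      omega
  · rw [if_neg h1]
    have := Ek_le (H1 := H1) (H2 := H2) (H3 := H3) (k := k)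
    omega

lemma Ek_split {k k' : ℕ} (h1 : k ≤ k') (h2 : k' ≤ n) :
    Ek n d b k = (Cd d k k' + Cb b k k') + Ek n d b k' := by
  unfold Ek Cd Cb
  rw [← Finset.Ico_union_Ico_eq_Ico h1 h2, Finset.filter_union, Finset.filter_union,
    Finset.card_union_of_disjoint, Finset.card_union_of_disjoint]
  · omega
  · exact Finset.disjoint_filter_filter (Finset.Ico_disjoint_Ico_consecutive k k' n)
  · exact Finset.disjoint_filter_filter (Finset.Ico_disjoint_Ico_consecutive k k' n)

include H1 H2 H3 in
lemma Dl_inj {k k' : ℕ} (hk : k ≤ n) (hk' : k' ≤ n) (hlt : k < k') :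
    Dl n d b k ≠ Dl n d b k' := by
  intro heq
  have hkn : k < n := lt_of_lt_of_le hlt hk'
  have hsplit := Ek_split (n := n) (d := d) (b := b) (le_of_lt hlt) hk'
  set C := Cd d k k' + Cb b k k' with hC
  -- case on whether k' is "high"
  by_cases hk'h : k' < n ∧ ¬ b k' ∧ ¬ (0 < k' ∧ d (k'-1))
  · -- k' high, so ¬ Lw k'
    have hnL : ¬ Lw d b k' := by
      rintro (h | h)
      · exact hk'h.2.1 h
      · exact hk'h.2.2 h
    have hDl' : Dl n d b k' = Ek n d b k' + (k'+1) := by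
      unfold Dl
      rw [if_pos ⟨hk'h.1, hk'h.2.1⟩, if_neg hk'h.2.2]
    by_cases hkh : ¬ b k ∧ ¬ (0 < k ∧ d (k-1))
    · -- both high : C ≤ k'-k-1 but C = k'-k needed
      have hCle : C ≤ k' - (k+1) := by
        calc C ≤ ((Ico (k+1) k').filter (Lw d b)).card := contribB H3 hkh.1 hnL
          _ ≤ k' - (k+1) := Lcard_le _ _
      have hDl : Dl n d b k = Ek n d b k + (k+1) := by
        unfold Dl
        rw [if_pos ⟨hkn, hkh.1⟩, if_neg hkh.2]
      rw [hDl, hDl', hsplit] at heq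
      omega
    · -- k low, k' high
      have hCle : C ≤ k' - k := by
        calc C ≤ ((Ico k k').filter (Lw d b)).card := contribA H3 hnL
          _ ≤ k' - k := Lcard_le _ _
      by_cases hbk : b k
      · have hDl : Dl n d b k = Ek n d b k := by
          unfold Dl; rw [if_neg (fun hc => hc.2 hbk)]; omega
        rw [hDl, hDl', hsplit] at heq
        omega
      · have ht2 : 0 < k ∧ d (k-1) := by tauto
        have hDl : Dl n d b k = Ek n d b k + 1 := by
          unfold Dl; rw [if_pos ⟨hkn, hbk⟩, if_pos ht2]
        rw [hDl, hDl', hsplit] at heq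
        omega
  · -- k' low
    have hε' : Dl n d b k' = Ek n d b k' ∨
        (Dl n d b k' = Ek n d b k' + 1 ∧ 0 < k' ∧ d (k'-1)) := by
      unfold Dl
      by_cases h1 : k' < n ∧ ¬ b k'
      · right
        have ht2 : 0 < k' ∧ d (k'-1) := by tauto
        rw [if_pos h1, if_pos ht2]
        exact ⟨rfl, ht2⟩
      · left; rw [if_neg h1]; omega
    -- C ≥ 1 facts
    have hCd1 : (0 < k' ∧ d (k'-1)) → 1 ≤ Cd d k k' := by
      rintro ⟨h0, hd⟩
      have : (k'-1) ∈ (Ico k k').filter d :=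
        Finset.mem_filter.mpr ⟨Finset.mem_Ico.mpr ⟨by omega, by omega⟩, hd⟩
      exact Finset.card_pos.mpr ⟨_, this⟩
    have hCb1 : b k → 1 ≤ Cb b k k' := by
      intro hbk
      have : k ∈ (Ico k k').filter b :=
        Finset.mem_filter.mpr ⟨Finset.mem_Ico.mpr ⟨le_refl _, hlt⟩, hbk⟩
      exact Finset.card_pos.mpr ⟨_, this⟩
    by_cases hkh : ¬ b k ∧ ¬ (0 < k ∧ d (k-1))
    · -- k high, k' low: C + k + 1 = ε'
      have hDl : Dl n d b k = Ek n d b k + (k+1) := by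
        unfold Dl; rw [if_pos ⟨hkn, hkh.1⟩, if_neg hkh.2]
      rcases hε' with h | ⟨h, ht2⟩
      · rw [hDl, h, hsplit] at heq; omega
      · have := hCd1 ht2
        rw [hDl, h, hsplit] at heq
        unfold C at heq
        omega
    · -- both low
      by_cases hbk : b k
      · have h1 := hCb1 hbk
        have hDl : Dl n d b k = Ek n d b k := by
          unfold Dl; rw [if_neg (fun hc => hc.2 hbk)]; omega
        rcases hε' with h | ⟨h, ht2⟩
        · rw [hDl, h, hsplit] at heq; unfold C at heq; omega
        · have h2 := hCd1 ht2
          rw [hDl, h, hsplit] at heq; unfold C at heq; omega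
      · have ht2k : 0 < k ∧ d (k-1) := by tauto
        have hDl : Dl n d b k = Ek n d b k + 1 := by
          unfold Dl; rw [if_pos ⟨hkn, hbk⟩, if_pos ht2k]
        rcases hε' with h | ⟨h, ht2⟩
        · rw [hDl, h, hsplit] at heq; omega
        · have h2 := hCd1 ht2
          rw [hDl, h, hsplit] at heq; unfold C at heq; omega
end core
end Core

section Bridge
variable {n : ℕ}

def bb (r : ℕ) (σ : Perm (Fin n)) (j : ℕ) : Prop := j < n ∧ n < nv σ j + r

lemma hH1 (r : ℕ) (σ : Perm (Fin n)) : ∀ j, dsc r σ j → j + 1 < n := fun _ h => h.1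
lemma hH2 (r : ℕ) (σ : Perm (Fin n)) : ∀ j, bb r σ j → j < n := fun _ h => h.1
lemma hH3 (r : ℕ) (σ : Perm (Fin n)) : ∀ j, dsc r σ j → ¬ bb r σ (j+1) := by
  rintro j ⟨h1, h2⟩ ⟨h3, h4⟩
  have := nv_lt σ (show j < n by omega)
  omega

lemma sum_ite_eq_Cd (r : ℕ) (σ : Perm (Fin n)) (k : Fin (n+1)) :
    (∑ j ∈ range n, (if (k:ℕ) ≤ j ∧ dsc r σ j then (1:ℕ) else 0)) = Cd (dsc r σ) (k:ℕ) n := by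
  rw [← Finset.card_filter]
  unfold Cd
  congr 1
  ext j
  simp only [mem_filter, mem_range, mem_Ico]
  tauto
  
lemma sum_ite_eq_Cb (r : ℕ) (σ : Perm (Fin n)) (k : Fin (n+1)) :
    (∑ b ∈ range n, (if (k:ℕ) ≤ b ∧ n < nv σ b + r then (1:ℕ) else 0)) = Cb (bb r σ) (k:ℕ) n := by
  rw [← Finset.card_filter]
  unfold Cb bb
  congr 1
  ext j
  simp only [mem_filter, mem_range, mem_Ico]
  tauto

lemma rmaj_ins_delta (r : ℕ) (σ : Perm (Fin n)) (k : Fin (n+1)) :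
    rmaj r (ins σ k) = rmaj r σ + Dl n (dsc r σ) (bb r σ) (k:ℕ) := by
  have h := rmaj_ins r σ k
  rw [sum_ite_eq_Cd r σ k, sum_ite_eq_Cb r σ k] at h
  have hS : Cd (dsc r σ) (k:ℕ) n + Cb (bb r σ) (k:ℕ) n
        + (if (k:ℕ) < n ∧ nv σ (k:ℕ) + r ≤ n then (k:ℕ)+1 else 0)
      = Dl n (dsc r σ) (bb r σ) (k:ℕ)
        + (if 0 < (k:ℕ) ∧ dsc r σ ((k:ℕ)-1) then (k:ℕ) else 0) := by
    unfold Dl Ek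
    by_cases ht2 : 0 < (k:ℕ) ∧ dsc r σ ((k:ℕ)-1)
    · have hkn : (k:ℕ) < n := by have := (ht2.2).1; omega
      have hbk : ¬ bb r σ (k:ℕ) := by
        have h3 := hH3 r σ ((k:ℕ)-1) ht2.2
        have he : (k:ℕ)-1+1 = (k:ℕ) := by omega
        rwa [he] at h3
      have hsk : nv σ (k:ℕ) + r ≤ n := by
        have := ht2.2.2
        have he : (k:ℕ)-1+1 = (k:ℕ) := by omega
        rw [he] at this
        have := nv_lt σ (show (k:ℕ)-1 < n by omega)
        omega
      rw [if_pos ⟨hkn, hsk⟩, if_pos ⟨hkn, hbk⟩, if_pos ht2, if_pos ht2]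
      omega
    · rw [if_neg ht2, if_neg ht2]
      by_cases hc : (k:ℕ) < n ∧ nv σ (k:ℕ) + r ≤ n
      · rw [if_pos hc, if_pos (show (k:ℕ) < n ∧ ¬ bb r σ (k:ℕ) from
          ⟨hc.1, fun hb => by unfold bb at hb; omega⟩)]
        omega
      · have hnb : ¬((k:ℕ) < n ∧ ¬ bb r σ (k:ℕ)) := by
          rintro ⟨h1, h2⟩
          apply hc
          refine ⟨h1, ?_⟩
          by_contra hcon
          exact h2 ⟨h1, by omega⟩
        rw [if_neg hc, if_neg hnb]
  omega

lemma sum_pow_delta {R : Type*} [CommSemiring R] (q : R) (r : ℕ) (σ : Perm (Fin n)) :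
    (∑ k : Fin (n+1), q ^ Dl n (dsc r σ) (bb r σ) (k:ℕ))
      = ∑ j : Fin (n+1), q ^ (j:ℕ) := by
  set dd := dsc r σ
  set bbb := bb r σ
  have hle : ∀ k : Fin (n+1), Dl n dd bbb (k:ℕ) ≤ n :=
    fun k => Dl_le (hH1 r σ) (hH2 r σ) (hH3 r σ) (Nat.lt_succ_iff.mp k.isLt)
  set g : Fin (n+1) → Fin (n+1) := fun k => ⟨Dl n dd bbb (k:ℕ), Nat.lt_succ_of_le (hle k)⟩ with hg
  have hginj : Function.Injective g := by
    intro x y hxy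
    have hval : Dl n dd bbb (x:ℕ) = Dl n dd bbb (y:ℕ) := congrArg Fin.val hxy
    rcases lt_trichotomy (x:ℕ) (y:ℕ) with h | h | h
    · exact absurd hval (Dl_inj (hH1 r σ) (hH2 r σ) (hH3 r σ)
        (Nat.lt_succ_iff.mp x.isLt) (Nat.lt_succ_iff.mp y.isLt) h)
    · exact Fin.ext h
    · exact absurd hval.symm (Dl_inj (hH1 r σ) (hH2 r σ) (hH3 r σ)
        (Nat.lt_succ_iff.mp y.isLt) (Nat.lt_succ_iff.mp x.isLt) h)
  have hgbij : Function.Bijective g := Finite.injective_iff_bijective.mp hginj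
  exact Fintype.sum_bijective g hgbij _ _ (fun x => rfl)

lemma sum_pow_rev {R : Type*} [CommSemiring R] (q : R) :
    (∑ k : Fin (n+1), q ^ (n - (k:ℕ))) = ∑ j : Fin (n+1), q ^ (j:ℕ) := by
  set g : Fin (n+1) → Fin (n+1) := fun k => ⟨n - (k:ℕ), by omega⟩ with hg
  have hginj : Function.Injective g := by
    intro x y hxy
    have hval : n - (x:ℕ) = n - (y:ℕ) := congrArg Fin.val hxy
    have hx := x.isLt
    have hy := y.isLt
    exact Fin.ext (by omega)
  exact Fintype.sum_bijective g (Finite.injective_iff_bijective.mp hginj) _ _ (fun x => rfl)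

lemma ins_bijective :
    Function.Bijective (fun p : Perm (Fin n) × Fin (n+1) => ins p.1 p.2) := by
  refine (Fintype.bijective_iff_injective_and_card _).mpr ⟨?_, ?_⟩
  · rintro ⟨σ, k⟩ ⟨σ', k'⟩ h
    simp only at h
    have hk : k = k' := by
      by_contra hne
      obtain ⟨z, hz⟩ := Fin.exists_succAbove_eq hne
      have h2 : ins σ k k = Fin.last n := ins_at σ k
      rw [h] at h2
      rw [← hz, ins_succAbove] at h2
      exact absurd h2 (Fin.castSucc_lt_last (σ' z)).ne
    subst hk
    have hσ : σ = σ' := by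
      apply Equiv.ext; intro j
      have h3 : ins σ k (k.succAbove j) = ins σ' k (k.succAbove j) := by rw [h]
      rw [ins_succAbove, ins_succAbove] at h3
      exact Fin.castSucc_injective _ h3
    rw [hσ]
  · rw [Fintype.card_prod, Fintype.card_perm, Fintype.card_perm,
      Fintype.card_fin, Fintype.card_fin, Nat.factorial_succ]
    ring
end Bridge

/-- rmaj is Mahonian, i.e. equidistributed with inv. -/
theorem rmaj_equidistributed_inv (r : ℕ) (hr : 1 ≤ r) (n : ℕ)
    (R : Type*) [CommSemiring R] (q : R) :
    (∑ π : Perm (Fin n), q ^ rmaj r π) = (∑ π : Perm (Fin n), q ^ inv π) := by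
  induction n with
  | zero =>
    refine Finset.sum_congr rfl (fun π _ => ?_)
    rw [rmaj_eq, inv_eq]
    simp
  | succ n ih =>
    have e1 : (∑ π : Perm (Fin (n+1)), q ^ rmaj r π)
        = ∑ p : Perm (Fin n) × Fin (n+1), q ^ rmaj r (ins p.1 p.2) :=
      (Fintype.sum_bijective _ ins_bijective _ _ (fun p => rfl)).symm
    have e2 : (∑ π : Perm (Fin (n+1)), q ^ inv π)
        = ∑ p : Perm (Fin n) × Fin (n+1), q ^ inv (ins p.1 p.2) :=
      (Fintype.sum_bijective _ ins_bijective _ _ (fun p => rfl)).symm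
    rw [e1, e2, Fintype.sum_prod_type, Fintype.sum_prod_type]
    have hL : ∀ σ : Perm (Fin n), (∑ k : Fin (n+1), q ^ rmaj r (ins σ k))
        = q ^ rmaj r σ * ∑ j : Fin (n+1), q ^ (j:ℕ) := by
      intro σ
      rw [← sum_pow_delta q r σ, Finset.mul_sum]
      refine Finset.sum_congr rfl (fun k _ => ?_)
      rw [rmaj_ins_delta r σ k, pow_add]
    have hR : ∀ σ : Perm (Fin n), (∑ k : Fin (n+1), q ^ inv (ins σ k))
        = q ^ inv σ * ∑ j : Fin (n+1), q ^ (j:ℕ) := by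
      intro σ
      rw [← sum_pow_rev q, Finset.mul_sum]
      refine Finset.sum_congr rfl (fun k _ => ?_)
      rw [inv_ins σ k, pow_add]
    rw [Finset.sum_congr rfl (fun σ _ => hL σ), Finset.sum_congr rfl (fun σ _ => hR σ),
      ← Finset.sum_mul, ← Finset.sum_mul, ih]

end

end PaperStat
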